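/- Let V be a unital Jordan algebra over K. The projection onto the first component, (A,B) ↦ A, restricts to a Lie algebra isomorphism from Inn(V,V) onto the inner structure algebra istr(V). In particular, for all x,y ∈ V one has L_x = (1/2)·D_{x,e} and [L_x, L_y] = (1/4)·(D_{x,y} − D_{y,x}). -/

import Mathlib

variable {K V : Type*} [Field K] [AddCommGroup V] [Module K V]

/-- The Jordan triple product `{x,y,z} = 2((xy)z + x(yz) - y(xz))`. -/
def triple (m : V →ₗ[K] V →ₗ[K] V) (x y z : V) : V :=
  2 • (m (m x y) z + m x (m y z) - m y (m x z))

/-- The operator `D_{x,y} = 2 L_{xy} + 2[L_x, L_y]`, satisfying `D_{x,y} z = {x,y,z}`. -/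
def Dop (m : V →ₗ[K] V →ₗ[K] V) (x y : V) : Module.End K V :=
  2 • (m (m x y) : Module.End K V) + 2 • ⁅(m x : Module.End K V), (m y : Module.End K V)⁆

/-- A derivation of the (Jordan) algebra `(V, m)`. -/
def IsDeriv (m : V →ₗ[K] V →ₗ[K] V) (D : Module.End K V) : Prop :=
  ∀ x y, D (m x y) = m (D x) y + m x (D y)

/-- A pair derivation `(D⁺, D⁻)` of the Jordan algebra `(V, m)`. -/
def IsPairDer (m : V →ₗ[K] V →ₗ[K] V) (Dp Dm : Module.End K V) : Prop :=
  ∀ x y z,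
    Dp (triple m x y z)
      = triple m (Dp x) y z + triple m x (Dm y) z + triple m x y (Dp z) ∧
    Dm (triple m x y z)
      = triple m (Dm x) y z + triple m x (Dp y) z + triple m x y (Dm z)

/-- For a unital Jordan algebra, projection onto the first component is a
Lie algebra isomorphism from `Inn(V,V)` onto `istr(V)`; in particular
`L_x = (1/2) D_{x,e}` and `[L_x, L_y] = (1/4)(D_{x,y} - D_{y,x})`. -/
theorem stmt1
    (h2 : (2 : K) ≠ 0) (h3 : (3 : K) ≠ 0)
    (m : V →ₗ[K] V →ₗ[K] V)
    (hcomm : ∀ x y : V, m x y = m y x)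
    (hJordan : ∀ x y z : V,
      ⁅(m x : Module.End K V), m (m y z)⁆ + ⁅(m y : Module.End K V), m (m z x)⁆
        + ⁅(m z : Module.End K V), m (m x y)⁆ = 0)
    (e : V) (he : ∀ x : V, m e x = x) :
    Set.BijOn (Prod.fst : Module.End K V × Module.End K V → Module.End K V)
      (Submodule.span K {p : Module.End K V × Module.End K V |
          ∃ x y, p = (Dop m x y, - Dop m y x)} : Set _)
      (Submodule.span K ({A : Module.End K V | ∃ x, A = m x} ∪
          {A : Module.End K V | ∃ x y, A = ⁅(m x : Module.End K V), (m y : Module.End K V)⁆})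
        : Set _) ∧
    (∀ x : V, (m x : Module.End K V) = (2 : K)⁻¹ • Dop m x e) ∧
    (∀ x y : V, ⁅(m x : Module.End K V), (m y : Module.End K V)⁆
        = (4 : K)⁻¹ • (Dop m x y - Dop m y x)) := by

  -- basic facts
  have hLe : ∀ x : V, m x e = x := fun x => by rw [hcomm, he]
  have hme : (m e : Module.End K V) = 1 := by
    ext x; exact he x
  -- D_{x,e} = 2 L_x
  have hDxe : ∀ x : V, Dop m x e = (2 : K) • (m x : Module.End K V) := by
    intro x
    rw [Dop, hLe, hme]
    simp [two_smul, Ring.lie_def]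
  have hM : ∀ x : V, (m x : Module.End K V) = (2 : K)⁻¹ • Dop m x e := by
    intro x
    rw [hDxe, inv_smul_smul₀ h2]
  -- D_{x,y} - D_{y,x} = 4 [L_x, L_y]
  have h4 : (4 : K) ≠ 0 := by
    have : (4 : K) = 2 * 2 := by norm_num
    rw [this]; exact mul_ne_zero h2 h2
  have hsub : ∀ x y : V, Dop m x y - Dop m y x
      = (4 : K) • ⁅(m x : Module.End K V), (m y : Module.End K V)⁆ := by
    intro x y
    rw [Dop, Dop, hcomm y x, ← @lie_skew _ LieRing.ofAssociativeRing (m x : Module.End K V) (m y)]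
    rw [show (4 : K) = ((4 : ℕ) : K) by norm_num, Nat.cast_smul_eq_nsmul]
    abel
  have hBr : ∀ x y : V, ⁅(m x : Module.End K V), (m y : Module.End K V)⁆
      = (4 : K)⁻¹ • (Dop m x y - Dop m y x) := by
    intro x y
    rw [hsub, inv_smul_smul₀ h4]
  -- D_{x,y} e = 2 (x y)
  have hDe : ∀ x y : V, (Dop m x y) e = 2 • m x y := by
    intro x y
    simp [Dop, Ring.lie_def, hLe, hcomm x y]
  set S : Submodule K (Module.End K V × Module.End K V) :=
    Submodule.span K {p : Module.End K V × Module.End K V |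
          ∃ x y, p = (Dop m x y, - Dop m y x)} with hS
  set T : Submodule K (Module.End K V) :=
    Submodule.span K ({A : Module.End K V | ∃ x, A = m x} ∪
          {A : Module.End K V | ∃ x y, A = ⁅(m x : Module.End K V), (m y : Module.End K V)⁆}) with hT
  -- the linear map whose graph contains S
  set ψ : Module.End K V →ₗ[K] Module.End K V × Module.End K V :=
    LinearMap.prod LinearMap.id
      (LinearMap.id - 2 • (m.comp (LinearMap.applyₗ e))) with hψ
  have hgraph : S ≤ LinearMap.range ψ := by
    rw [hS, Submodule.span_le]
    rintro p ⟨x, y, rfl⟩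
    refine ⟨Dop m x y, ?_⟩
    have : ψ (Dop m x y) = (Dop m x y, Dop m x y - 2 • m ((Dop m x y) e)) := rfl
    rw [this, hDe, Prod.mk.injEq]
    refine ⟨rfl, ?_⟩
    have hm2 : m (2 • m x y) = 2 • m (m x y) := by
      rw [map_nsmul]
    rw [hm2, Dop, Dop, hcomm y x, ← @lie_skew _ LieRing.ofAssociativeRing (m x : Module.End K V) (m y)]
    abel
  have hfstψ : ∀ A : Module.End K V, (ψ A).1 = A := fun A => rfl
  have hself : ∀ p, p ∈ S → ψ p.1 = p := by
    intro p hp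
    obtain ⟨a, ha⟩ := hgraph hp
    have h1 : a = p.1 := by rw [← ha, hfstψ]
    rw [h1] at ha; exact ha
  refine ⟨⟨?_, ?_, ?_⟩, hM, hBr⟩
  · -- MapsTo
    intro p hp
    have hle : S ≤ T.comap (LinearMap.fst K (Module.End K V) (Module.End K V)) := by
      rw [hS, Submodule.span_le]
      rintro p ⟨x, y, rfl⟩
      show Dop m x y ∈ T
      rw [Dop]
      refine add_mem (nsmul_mem ?_ 2) (nsmul_mem ?_ 2)
      · exact Submodule.subset_span (Or.inl ⟨m x y, rfl⟩)
      · exact Submodule.subset_span (Or.inr ⟨x, y, rfl⟩)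
    exact hle hp
  · -- InjOn
    intro p hp q hq h
    rw [← hself p hp, ← hself q hq, h]
  · -- SurjOn
    have hle : T ≤ Submodule.map (LinearMap.fst K (Module.End K V) (Module.End K V)) S := by
      rw [hT, Submodule.span_le]
      rintro A (⟨x, rfl⟩ | ⟨x, y, rfl⟩)
      · refine ⟨(2 : K)⁻¹ • (Dop m x e, - Dop m e x), ?_, ?_⟩
        · exact Submodule.smul_mem _ _ (Submodule.subset_span ⟨x, e, rfl⟩)
        · show (2 : K)⁻¹ • Dop m x e = m x
          rw [hM x]
      · refine ⟨(4 : K)⁻¹ • ((Dop m x y, - Dop m y x) - (Dop m y x, - Dop m x y)), ?_, ?_⟩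
        · exact Submodule.smul_mem _ _ (sub_mem (Submodule.subset_span ⟨x, y, rfl⟩)
            (Submodule.subset_span ⟨y, x, rfl⟩))
        · show (4 : K)⁻¹ • (Dop m x y - Dop m y x) = _
          rw [hBr x y]
    intro A hA
    obtain ⟨p, hpS, hpA⟩ := hle hA
    exact ⟨p, hpS, hpA⟩
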